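/- For every positive integer n, D_{n+1}(x) − D_{n−1}(x) = 2x(2n+1)·S_n(x), where D_m(x) = ∑_{k=0}^m C(m,k) C(m+k,k) x^k and S_n(x) = ∑_{k=0}^n C(n+k,2k) C_k x^k with C_k the k-th Catalan number. -/

import Mathlib

open Finset Polynomial Nat

lemma cc (a b : ℕ) : (((a+b).choose a : ℕ) : ℚ) = (a+b)! / (a ! * b !) := by
  rw [Nat.cast_choose ℚ (Nat.le_add_right a b), Nat.add_sub_cancel_left]

lemma catQ (j : ℕ) : (catalan j : ℚ) = ((j+j).choose j : ℚ) / (j+1) := by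
  have h := succ_mul_catalan_eq_centralBinom j
  have : ((j+1) * catalan j : ℚ) = ((j+j).choose j : ℚ) := by
    exact_mod_cast h.trans (by rw [Nat.centralBinom, two_mul])
  field_simp at this ⊢
  linarith [this]

lemma key (m j : ℕ) (hj : j ≤ m + 1) :
    ((m+2).choose (j+1) : ℚ) * (((m+2) + (j+1)).choose (j+1) : ℚ)
      - (m.choose (j+1) : ℚ) * ((m + (j+1)).choose (j+1) : ℚ)
    = 2 * (2*(m+1)+1) * (((m+1+j).choose (2*j) : ℚ) * (catalan j : ℚ)) := by
  have fne : ∀ a : ℕ, ((a ! : ℕ) : ℚ) ≠ 0 := fun a => Nat.cast_ne_zero.2 (Nat.factorial_ne_zero a)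
  rcases Nat.lt_or_ge j m with h | h
  · obtain ⟨t, rfl⟩ : ∃ t, m = j + t + 1 := ⟨m - j - 1, by omega⟩
    rw [catQ]
    have r1 : ((j+t+1+2).choose (j+1) : ℚ) = (((j+1)+(t+2)).choose (j+1) : ℚ) := by
      rw [show j+t+1+2 = (j+1)+(t+2) by omega]
    have r2 : ((j+t+1+2+(j+1)).choose (j+1) : ℚ) = (((j+1)+(j+t+3)).choose (j+1) : ℚ) := by
      rw [show j+t+1+2+(j+1) = (j+1)+(j+t+3) by omega]
    have r3 : ((j+t+1).choose (j+1) : ℚ) = (((j+1)+t).choose (j+1) : ℚ) := by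
      rw [show j+t+1 = (j+1)+t by omega]
    have r4 : ((j+t+1+(j+1)).choose (j+1) : ℚ) = (((j+1)+(j+t+1)).choose (j+1) : ℚ) := by
      rw [show j+t+1+(j+1) = (j+1)+(j+t+1) by omega]
    have r5 : ((j+t+1+1+j).choose (2*j) : ℚ) = (((j+j)+(t+2)).choose (j+j) : ℚ) := by
      rw [show j+t+1+1+j = (j+j)+(t+2) by omega, two_mul]
    rw [r1, r2, r3, r4, r5, cc, cc, cc, cc, cc, cc]
    have e1 : ((t+2)! : ℚ) = (t+2)*(t+1)*(t)! := by push_cast [Nat.factorial_succ]; ring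
    have e2 : ((j+1)! : ℚ) = (j+1)*(j)! := by push_cast [Nat.factorial_succ]; ring
    have e3 : (((j+1)+(j+t+3))! : ℚ) = (2*j+t+4)*(2*j+t+3)*(((j+j)+(t+2))!) := by
      rw [show (j+1)+(j+t+3) = ((j+j)+(t+2))+1+1 by omega]
      push_cast [Nat.factorial_succ]; ring
    have e4 : (((j+1)+(j+t+1))! : ℚ) = (((j+j)+(t+2))!) := by
      rw [show (j+1)+(j+t+1) = (j+j)+(t+2) by omega]
    rw [e1, e2, e3, e4]
    push_cast
    field_simp
    ring_nf
  · obtain rfl | rfl : j = m ∨ j = m + 1 := by omega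
    · -- j = m
      rw [catQ, Nat.choose_succ_self]
      have r1 : ((j+2).choose (j+1) : ℚ) = (((j+1)+1).choose (j+1) : ℚ) := by norm_num
      have r2 : ((j+2+(j+1)).choose (j+1) : ℚ) = (((j+1)+(j+2)).choose (j+1) : ℚ) := by
        rw [show j+2+(j+1) = (j+1)+(j+2) by omega]
      have r3 : ((j+1+j).choose (2*j) : ℚ) = (((j+j)+1).choose (j+j) : ℚ) := by
        rw [show j+1+j = (j+j)+1 by omega, two_mul]
      rw [r1, r2, r3, cc, cc, cc, cc]
      have e1 : (((j+1)+(j+2))! : ℚ) = (2*j+3)*(2*j+2)*(2*j+1)*((j+j)!) := by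
        rw [show (j+1)+(j+2) = (j+j)+1+1+1 by omega]
        push_cast [Nat.factorial_succ]; ring
      have e2 : (((j+j)+1)! : ℚ) = (2*j+1)*((j+j)!) := by
        push_cast [Nat.factorial_succ]; ring
      have e3 : ((j+1)! : ℚ) = (j+1)*(j)! := by push_cast [Nat.factorial_succ]; ring
      have e4 : ((1:ℕ)! : ℚ) = 1 := by norm_num
      rw [e1, e2, e3, e4]
      push_cast
      field_simp
      ring
    · -- j = m + 1
      have r0 : ((m+2).choose (m+1+1) : ℚ) = 1 := by
        norm_num [show m+1+1 = m+2 by omega]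
      rw [r0, Nat.choose_eq_zero_of_lt (show m < m+1+1 by omega)]
      have r2 : ((m+2+(m+1+1)).choose (m+1+1) : ℚ) = (Nat.centralBinom (m+2) : ℚ) := by
        rw [show m+2+(m+1+1) = 2*(m+2) by omega, show m+1+1 = m+2 by omega, Nat.centralBinom]
      have r3 : ((m+1+(m+1)).choose (2*(m+1)) : ℚ) = 1 := by
        rw [show m+1+(m+1) = 2*(m+1) by omega, Nat.choose_self, Nat.cast_one]
      rw [r2, r3]
      have h1 := Nat.succ_mul_centralBinom_succ (m+1)
      have h2 := succ_mul_catalan_eq_centralBinom (m+1)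
      have h1' : ((m+2) * Nat.centralBinom (m+2) : ℚ) = 2 * (2*(m+1)+1) * Nat.centralBinom (m+1) := by
        exact_mod_cast congrArg (Nat.cast : ℕ → ℚ) h1
      have h2' : ((m+2) * catalan (m+1) : ℚ) = Nat.centralBinom (m+1) := by
        exact_mod_cast congrArg (Nat.cast : ℕ → ℚ) h2
      push_cast at h1' h2' ⊢
      have hm2 : ((m:ℚ)+2) ≠ 0 := by positivity
      have key3 : (↑(Nat.centralBinom (m+2)) : ℚ) = 2*(2*((m:ℚ)+1)+1) * (catalan (m+1) : ℚ) := by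
        apply mul_left_cancel₀ hm2
        rw [h1', ← h2']; ring
      rw [key3]; ring

theorem delannoy_diff (n : ℕ) (hn : 1 ≤ n) :
    (∑ k ∈ range (n + 1 + 1), C (((n + 1).choose k : ℚ) * ((n + 1 + k).choose k : ℚ)) * X ^ k) -
      (∑ k ∈ range (n - 1 + 1), C (((n - 1).choose k : ℚ) * ((n - 1 + k).choose k : ℚ)) * X ^ k) =
    2 * X * C ((2 * n + 1 : ℚ)) *
      ∑ k ∈ range (n + 1),
        C (((n + k).choose (2 * k) : ℚ) * (catalan k : ℚ)) * X ^ k := by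
  obtain ⟨m, rfl⟩ : ∃ m, n = m + 1 := ⟨n - 1, by omega⟩
  rw [show m + 1 - 1 = m from rfl]
  have h2 : (∑ k ∈ range (m + 1), C ((m.choose k : ℚ) * ((m + k).choose k : ℚ)) * X ^ k)
      = ∑ k ∈ range (m + 1 + 1 + 1), C ((m.choose k : ℚ) * ((m + k).choose k : ℚ)) * X ^ k := by
    apply Finset.sum_subset (by apply Finset.range_subset_range.2; omega)
    intro x _ hx
    rw [Nat.choose_eq_zero_of_lt (by simp at hx ⊢; omega)]
    simp
  rw [h2, ← Finset.sum_sub_distrib]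
  have h3 : ∀ k, C (((m+1+1).choose k : ℚ) * ((m+1+1+k).choose k : ℚ)) * X ^ k
      - C ((m.choose k : ℚ) * ((m + k).choose k : ℚ)) * X ^ k
      = C (((m+1+1).choose k : ℚ) * ((m+1+1+k).choose k : ℚ)
          - (m.choose k : ℚ) * ((m + k).choose k : ℚ)) * X ^ k := by
    intro k; rw [map_sub, sub_mul]
  simp only [h3]
  rw [Finset.sum_range_succ']
  simp only [Nat.choose_zero_right, Nat.cast_one, one_mul, pow_zero, sub_self, map_zero,
    zero_mul, add_zero, mul_one]
  rw [Finset.mul_sum]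
  apply Finset.sum_congr rfl
  intro i hi
  have hi' : i ≤ m + 1 := by simp at hi; omega
  have hk := key m i hi'
  push_cast at hk ⊢
  rw [hk]
  simp only [map_mul, map_add, map_one, map_ofNat, map_natCast]
  ring
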